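/- Let K ∈ ℝ^{m×n} be such that A + B K is Schur stable (spectral radius < 1) for all (A,B) with X_+ = A X_- + B U_-, where this solution set is nonempty. Then A_0 + B_0 K = 0 for every (A_0,B_0) with A_0 X_- + B_0 U_- = 0; equivalently, the column space of [I; K] is contained in the column space of [X_-; U_-]. -/

import Mathlib

/-- A real square matrix is Schur stable if all its complex eigenvalues have modulus
strictly less than one. -/
def SchurStable {n : ℕ} (M : Matrix (Fin n) (Fin n) ℝ) : Prop :=
  ∀ z ∈ spectrum ℂ (M.map Complex.ofReal), ‖z‖ < 1

open Matrix Polynomial in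
lemma root_mem_spectrum_aux {k : ℕ} (M : Matrix (Fin k) (Fin k) ℂ) {z : ℂ}
    (hz : M.charpoly.IsRoot z) : z ∈ spectrum ℂ M := by
  rw [spectrum.mem_iff]
  intro hu
  have hdet := (Matrix.isUnit_iff_isUnit_det _).mp hu
  have heval : M.charpoly.eval z = (algebraMap ℂ _ z - M).det := by
    rw [Matrix.charpoly, eval_det, Matrix.matPolyEquiv_charmatrix]
    simp [Matrix.scalar_apply, Matrix.algebraMap_eq_diagonal, Pi.algebraMap_def]
  rw [hz.eq_zero] at heval
  rw [← heval] at hdet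
  simp at hdet

open Matrix Polynomial in
lemma schur_trace_bound_aux {k : ℕ} {M : Matrix (Fin k) (Fin k) ℝ} (h : SchurStable M) :
    |M.trace| ≤ (k : ℝ) := by
  set Mc := M.map Complex.ofReal with hMc
  have htr : Mc.trace = ((M.trace : ℝ) : ℂ) := by
    simp [Matrix.trace, Matrix.diag, hMc, Matrix.map_apply]
  have hsum := Mc.trace_eq_sum_roots_charpoly
  have hcard : (Multiset.card Mc.charpoly.roots : ℝ) ≤ (k : ℝ) := by
    have h1 := Polynomial.card_roots' Mc.charpoly
    rw [Mc.charpoly_natDegree_eq_dim, Fintype.card_fin] at h1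
    exact_mod_cast h1
  have hroot : ∀ x ∈ Mc.charpoly.roots.map norm, x ≤ (1 : ℝ) := by
    intro x hx
    obtain ⟨z, hzz, rfl⟩ := Multiset.mem_map.mp hx
    exact le_of_lt (h z (root_mem_spectrum_aux Mc (Polynomial.isRoot_of_mem_roots hzz)))
  calc |M.trace| = ‖((M.trace : ℝ) : ℂ)‖ := by rw [Complex.norm_real, Real.norm_eq_abs]
    _ = ‖Mc.trace‖ := by rw [htr]
    _ = ‖Mc.charpoly.roots.sum‖ := by rw [hsum]
    _ ≤ (Mc.charpoly.roots.map norm).sum := norm_multiset_sum_le _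
    _ ≤ (Multiset.card (Mc.charpoly.roots.map norm)) • (1 : ℝ) :=
        Multiset.sum_le_card_nsmul _ _ hroot
    _ ≤ (k : ℝ) := by
        rw [Multiset.card_map, nsmul_eq_mul, mul_one]; exact hcard

open Matrix in
lemma trace_stdBasis_mul_aux {k : ℕ} (i j : Fin k) (t : ℝ) (N : Matrix (Fin k) (Fin k) ℝ) :
    (Matrix.single j i t * N).trace = t * N i j := by
  simp [Matrix.trace, Matrix.diag, Matrix.mul_apply, Matrix.single,
    Matrix.of_apply, ite_mul, Finset.sum_ite_eq, Finset.sum_ite_eq', ite_and]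

/-- If K stabilizes every system consistent with the data, then A₀ + B₀K = 0 for
every (A₀,B₀) in the homogeneous solution set; equivalently the column space of
[I; K] is contained in that of [X₋; U₋]. -/
theorem necessary_condition_stabilization
    (n m T : ℕ)
    (Xm Xp : Matrix (Fin n) (Fin T) ℝ) (Um : Matrix (Fin m) (Fin T) ℝ)
    (K : Matrix (Fin m) (Fin n) ℝ)
    (hne : ∃ (A : Matrix (Fin n) (Fin n) ℝ) (B : Matrix (Fin n) (Fin m) ℝ),
      Xp = A * Xm + B * Um)
    (hK : ∀ (A : Matrix (Fin n) (Fin n) ℝ) (B : Matrix (Fin n) (Fin m) ℝ),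
      Xp = A * Xm + B * Um → SchurStable (A + B * K)) :
    (∀ (A0 : Matrix (Fin n) (Fin n) ℝ) (B0 : Matrix (Fin n) (Fin m) ℝ),
      A0 * Xm + B0 * Um = 0 → A0 + B0 * K = 0)
    ∧ LinearMap.range (Matrix.fromRows (1 : Matrix (Fin n) (Fin n) ℝ) K).mulVecLin
      ≤ LinearMap.range (Matrix.fromRows Xm Um).mulVecLin := by
  obtain ⟨A, B, hAB⟩ := hne
  have part1 : ∀ (A0 : Matrix (Fin n) (Fin n) ℝ) (B0 : Matrix (Fin n) (Fin m) ℝ),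
      A0 * Xm + B0 * Um = 0 → A0 + B0 * K = 0 := by
    intro A0 B0 h0
    by_contra hNe
    set N := A0 + B0 * K with hN
    obtain ⟨i, j, hij⟩ : ∃ i j, N i j ≠ 0 := by
      by_contra hc; push_neg at hc
      exact hNe (Matrix.ext fun i j => hc i j)
    set M0 := A + B * K with hM0
    have key : ∀ t : ℝ, SchurStable (M0 + Matrix.single j i t * N) := by
      intro t
      set E := Matrix.single j i t with hE
      have hsol : Xp = (A + E * A0) * Xm + (B + E * B0) * Um := by
        rw [Matrix.add_mul, Matrix.add_mul, Matrix.mul_assoc, Matrix.mul_assoc]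
        calc Xp = A * Xm + B * Um := hAB
          _ = A * Xm + B * Um + E * (A0 * Xm + B0 * Um) := by
              rw [h0, Matrix.mul_zero, add_zero]
          _ = A * Xm + E * (A0 * Xm) + (B * Um + E * (B0 * Um)) := by
              rw [Matrix.mul_add]; abel
      have hstab := hK _ _ hsol
      have heq : A + E * A0 + (B + E * B0) * K = M0 + E * N := by
        rw [hN, hM0, Matrix.add_mul, Matrix.mul_add, Matrix.mul_assoc]; abel
      rwa [heq] at hstab
    set t := ((n : ℝ) + 1 - M0.trace) / N i j with ht
    have hb := schur_trace_bound_aux (key t)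
    rw [Matrix.trace_add, trace_stdBasis_mul_aux, ht, div_mul_cancel₀ _ hij] at hb
    rw [show M0.trace + ((n : ℝ) + 1 - M0.trace) = (n : ℝ) + 1 by ring] at hb
    rw [abs_of_nonneg (by positivity)] at hb
    linarith
  refine ⟨part1, ?_⟩
  rintro v ⟨x, rfl⟩
  rcases isEmpty_or_nonempty (Fin n) with hE | hNe
  · have hx : x = 0 := Subsingleton.elim _ _
    rw [hx, map_zero]
    exact Submodule.zero_mem _
  obtain ⟨i0⟩ := hNe
  by_contra hnot
  obtain ⟨f, hfv, hmap⟩ :=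
    Submodule.exists_dual_map_eq_bot_of_notMem hnot inferInstance
  have hker : ∀ y ∈ LinearMap.range (Matrix.fromRows Xm Um).mulVecLin, f y = 0 := by
    intro y hy
    have hmem : f y ∈ Submodule.map f (LinearMap.range (Matrix.fromRows Xm Um).mulVecLin) :=
      ⟨y, hy, rfl⟩
    rw [hmap] at hmem
    simpa using hmem
  set z : (Fin n ⊕ Fin m) → ℝ := fun p => f (fun q => if p = q then 1 else 0) with hz
  have hf_eq : ∀ u : (Fin n ⊕ Fin m) → ℝ, f u = ∑ p, u p * z p := by
    intro u
    rw [LinearMap.pi_apply_eq_sum_univ]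
    simp [hz, smul_eq_mul]
  have hcolrel : ∀ τ : Fin T,
      (∑ a, Xm a τ * z (Sum.inl a)) + (∑ b, Um b τ * z (Sum.inr b)) = 0 := by
    intro τ
    have h2 := hker _ ⟨Pi.single τ 1, rfl⟩
    rw [hf_eq, Matrix.mulVecLin_apply, Matrix.fromRows_mulVec, Fintype.sum_sum_type] at h2
    simpa [Matrix.mulVec_single] using h2
  set A0 : Matrix (Fin n) (Fin n) ℝ :=
    Matrix.vecMulVec (Pi.single i0 1) (fun a => z (Sum.inl a)) with hA0
  set B0 : Matrix (Fin n) (Fin m) ℝ :=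
    Matrix.vecMulVec (Pi.single i0 1) (fun b => z (Sum.inr b)) with hB0
  have hA0B0 : A0 * Xm + B0 * Um = 0 := by
    ext i τ
    simp only [Matrix.add_apply, Matrix.mul_apply, Matrix.vecMulVec_apply,
      Matrix.zero_apply, hA0, hB0]
    have hsplit : (∑ a, (Pi.single i0 1 : Fin n → ℝ) i * z (Sum.inl a) * Xm a τ)
          + ∑ b, (Pi.single i0 1 : Fin n → ℝ) i * z (Sum.inr b) * Um b τ
        = (Pi.single i0 1 : Fin n → ℝ) i
            * ((∑ a, Xm a τ * z (Sum.inl a)) + ∑ b, Um b τ * z (Sum.inr b)) := by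
      rw [mul_add, Finset.mul_sum, Finset.mul_sum]
      congr 1 <;> exact Finset.sum_congr rfl (by intros; ring)
    rw [hsplit, hcolrel τ, mul_zero]
  have hstab := part1 A0 B0 hA0B0
  have hrow : ∀ a : Fin n, z (Sum.inl a) + ∑ b, z (Sum.inr b) * K b a = 0 := by
    intro a
    have h3 := congrFun (congrFun hstab i0) a
    simpa [hA0, hB0, Matrix.add_apply, Matrix.mul_apply, Matrix.vecMulVec_apply,
      Pi.single_eq_same] using h3
  apply hfv
  rw [hf_eq, Matrix.mulVecLin_apply, Matrix.fromRows_mulVec, Fintype.sum_sum_type]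
  have hterm : ∀ a : Fin n, x a * z (Sum.inl a) + ∑ b, (K b a * x a) * z (Sum.inr b) = 0 := by
    intro a
    calc x a * z (Sum.inl a) + ∑ b, (K b a * x a) * z (Sum.inr b)
        = x a * (z (Sum.inl a) + ∑ b, z (Sum.inr b) * K b a) := by
          rw [mul_add, Finset.mul_sum]
          congr 1
          exact Finset.sum_congr rfl (by intros; ring)
      _ = 0 := by rw [hrow a, mul_zero]
  calc (∑ a, (Sum.elim ((1 : Matrix (Fin n) (Fin n) ℝ).mulVec x) (K.mulVec x) (Sum.inl a))
          * z (Sum.inl a))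
        + ∑ b, (Sum.elim ((1 : Matrix (Fin n) (Fin n) ℝ).mulVec x) (K.mulVec x) (Sum.inr b))
          * z (Sum.inr b)
      = (∑ a, x a * z (Sum.inl a)) + ∑ b, (∑ a, K b a * x a) * z (Sum.inr b) := by
        simp [Matrix.one_mulVec, Matrix.mulVec, dotProduct]
    _ = (∑ a, x a * z (Sum.inl a)) + ∑ a, ∑ b, (K b a * x a) * z (Sum.inr b) := by
        rw [Finset.sum_comm]
        congr 1
        exact Finset.sum_congr rfl fun b _ => Finset.sum_mul _ _ _
    _ = ∑ a, (x a * z (Sum.inl a) + ∑ b, (K b a * x a) * z (Sum.inr b)) := by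
        rw [Finset.sum_add_distrib]
    _ = 0 := Finset.sum_eq_zero fun a _ => hterm a
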